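/- Let (Ω, P) be a probability space, σ > 0, a < 0, h > 0, and let N, M ≥ 1 be integers; set T = N·h and B = M·N. Let x_1, …, x_M be real-valued stochastic processes on Ω indexed by t ∈ [0, T] such that each x_i(kh) is measurable and lies in L⁴(P) for 0 ≤ k ≤ N−1, the random vectors (x_i(0), x_i(h), …, x_i((N−1)h)), i = 1, …, M, are mutually independent, and for each i the moment identities E[x_i(t)²] = (σ²/(2a))(e^{2at} − 1) for all t ∈ [0, T] and E[x_i(s)² x_i(t)²] = (σ⁴/(4a²))(e^{2as} − 1) e^{2at} [(e^{−2as} − e^{−2at}) + 3(1 − e^{−2as})] for all 0 ≤ s ≤ t ≤ T hold. Define the Monte-Carlo estimator V̂_M(h) = (1/M) Σ_{i=1}^{M} Σ_{k=0}^{N−1} h · x_i(kh)² and V_T = (σ²/(2a)) ((e^{2aT} − 1)/(2a) − T). Then E[(V̂_M(h) − V_T)²] = E1(h, T, a) + E2(h, T, a)/B, where E1(h,T,a) = σ⁴(−2ah + e^{2ah} − 1)²(e^{2aT} − 1)² / (16a⁴(e^{2ah} − 1)²) and E2(h,T,a) = σ⁴T[h(e^{2aT} − 1)(4e^{2ah}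 + e^{2aT} + 1) − (e^{2ah} − 1)(e^{2ah} + 4e^{2aT} + 1)T] / (2a²(e^{2ah} − 1)²). -/

import Mathlib

open MeasureTheory ProbabilityTheory

lemma aux_geom (q : ℝ) (N : ℕ) : (∑ k ∈ Finset.range N, q ^ k) * (q - 1) = q ^ N - 1 :=
  geom_sum_mul q N

lemma aux_rev (q : ℝ) (n : ℕ) :
    ∑ k ∈ Finset.range n, q ^ (n - k) = q * ∑ k ∈ Finset.range n, q ^ k := by
  rw [Finset.mul_sum]
  rw [← Finset.sum_range_reflect (fun j => q * q ^ j) n]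
  refine Finset.sum_congr rfl fun j hj => ?_
  rw [← pow_succ']
  congr 1
  simp only [Finset.mem_range] at hj
  omega

lemma aux_D (q : ℝ) (N : ℕ) :
    (q - 1) ^ 2 * ∑ k ∈ Finset.range N, ∑ l ∈ Finset.range N,
        (q ^ (k + l) - 2 * q ^ (max k l) + q ^ (max k l - min k l)) =
      (q ^ N - 1) * (4 * q + q ^ N + 1) - N * (q - 1) * (q + 4 * q ^ N + 1) := by
  induction N with
  | zero => simp
  | succ n ih =>
    have hS := aux_geom q n
    have hrev := aux_rev q n
    rw [Finset.sum_range_succ]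
    simp only [Finset.sum_range_succ]
    rw [Finset.sum_add_distrib]
    have h1 : ∑ k ∈ Finset.range n,
        (q ^ (k + n) - 2 * q ^ (max k n) + q ^ (max k n - min k n)) =
        q ^ n * (∑ k ∈ Finset.range n, q ^ k) - 2 * n * q ^ n
          + q * ∑ k ∈ Finset.range n, q ^ k := by
      rw [← hrev]
      rw [Finset.sum_congr rfl (fun k hk => by
        simp only [Finset.mem_range] at hk
        rw [max_eq_right hk.le, min_eq_left hk.le, pow_add])]
      rw [Finset.sum_add_distrib, Finset.sum_sub_distrib, ← Finset.sum_mul,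
        Finset.sum_const, Finset.card_range]
      simp only [nsmul_eq_mul]
      ring
    have h2 : ∑ l ∈ Finset.range n,
        (q ^ (n + l) - 2 * q ^ (max n l) + q ^ (max n l - min n l)) =
        q ^ n * (∑ k ∈ Finset.range n, q ^ k) - 2 * n * q ^ n
          + q * ∑ k ∈ Finset.range n, q ^ k := by
      rw [← hrev]
      rw [Finset.sum_congr rfl (fun l hl => by
        simp only [Finset.mem_range] at hl
        rw [max_eq_left hl.le, min_eq_right hl.le, pow_add])]
      rw [Finset.sum_add_distrib, Finset.sum_sub_distrib, ← Finset.mul_sum,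
        Finset.sum_const, Finset.card_range]
      simp only [nsmul_eq_mul]
      ring
    rw [h1, h2]
    simp only [max_self, min_self, Nat.sub_self, pow_zero]
    push_cast
    linear_combination ih + (2 * (q ^ n + q) * (q - 1)) * hS

set_option maxHeartbeats 2000000 in
theorem stmt_0
    {Ω : Type*} [MeasurableSpace Ω] (P : Measure Ω) [IsProbabilityMeasure P]
    (σ a h : ℝ) (hσ : 0 < σ) (ha : a < 0) (hh : 0 < h)
    (N M : ℕ) (hN : 1 ≤ N) (hM : 1 ≤ M)
    (x : Fin M → ℝ → Ω → ℝ)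
    (hmeas : ∀ (i : Fin M) (k : ℕ), k < N → Measurable (x i (k * h)))
    (hL4 : ∀ (i : Fin M) (k : ℕ), k < N → MemLp (x i (k * h)) 4 P)
    (hindep : iIndepFun
      (fun (i : Fin M) (ω : Ω) => fun k : Fin N => x i (k * h) ω) P)
    (hm2 : ∀ (i : Fin M) (t : ℝ), 0 ≤ t → t ≤ N * h →
      ∫ ω, (x i t ω) ^ 2 ∂P = σ ^ 2 / (2 * a) * (Real.exp (2 * a * t) - 1))
    (hm4 : ∀ (i : Fin M) (s t : ℝ), 0 ≤ s → s ≤ t → t ≤ N * h →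
      ∫ ω, (x i s ω) ^ 2 * (x i t ω) ^ 2 ∂P =
        σ ^ 4 / (4 * a ^ 2) * (Real.exp (2 * a * s) - 1) * Real.exp (2 * a * t) *
          ((Real.exp (-2 * a * s) - Real.exp (-2 * a * t)) +
            3 * (1 - Real.exp (-2 * a * s)))) :
    ∫ ω, ((1 / (M : ℝ)) * ∑ i : Fin M, ∑ k ∈ Finset.range N, h * (x i (k * h) ω) ^ 2 -
        σ ^ 2 / (2 * a) * ((Real.exp (2 * a * (N * h)) - 1) / (2 * a) - N * h)) ^ 2 ∂P =
      σ ^ 4 * (-2 * a * h + Real.exp (2 * a * h) - 1) ^ 2 *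
          (Real.exp (2 * a * (N * h)) - 1) ^ 2 /
        (16 * a ^ 4 * (Real.exp (2 * a * h) - 1) ^ 2) +
      σ ^ 4 * (N * h) * (h * (Real.exp (2 * a * (N * h)) - 1) *
            (4 * Real.exp (2 * a * h) + Real.exp (2 * a * (N * h)) + 1) -
          (Real.exp (2 * a * h) - 1) *
            (Real.exp (2 * a * h) + 4 * Real.exp (2 * a * (N * h)) + 1) * (N * h)) /
        (2 * a ^ 2 * (Real.exp (2 * a * h) - 1) ^ 2) / ((M : ℝ) * N) := by
  classical
  have ha0 : a ≠ 0 := ne_of_lt ha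
  have hM0 : (M : ℝ) ≠ 0 := Nat.cast_ne_zero.mpr (by omega)
  have hN0 : (N : ℝ) ≠ 0 := Nat.cast_ne_zero.mpr (by omega)
  set q : ℝ := Real.exp (2 * a * h) with hqdef
  have hqpos : 0 < q := Real.exp_pos _
  have hq1 : q ≠ 1 := by
    have h1 : 2 * a * h < 0 := by nlinarith
    exact ne_of_lt (Real.exp_lt_one_iff.mpr h1)
  have hqne : q - 1 ≠ 0 := sub_ne_zero.mpr hq1
  have hexpk : ∀ k : ℕ, Real.exp (2 * a * ((k : ℝ) * h)) = q ^ k := by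
    intro k
    rw [show 2 * a * ((k : ℝ) * h) = (k : ℝ) * (2 * a * h) by ring, Real.exp_nat_mul]
  rw [hexpk N]
  set c : ℝ := σ ^ 2 / (2 * a) with hcdef
  set V : ℝ := c * ((q ^ N - 1) / (2 * a) - (N : ℝ) * h) with hVdef
  -- moments in grid form
  have hNh : ∀ k : ℕ, k ≤ N → (k : ℝ) * h ≤ (N : ℝ) * h := by
    intro k hk
    have : (k : ℝ) ≤ N := Nat.cast_le.mpr hk
    nlinarith
  have hm2' : ∀ (i : Fin M) (k : ℕ), k < N →
      ∫ ω, (x i (k * h) ω) ^ 2 ∂P = c * (q ^ k - 1) := by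
    intro i k hk
    rw [hm2 i (k * h) (by positivity) (hNh k hk.le), hexpk k]
  have hm4' : ∀ (i : Fin M) (k l : ℕ), k ≤ l → l < N →
      ∫ ω, (x i (k * h) ω) ^ 2 * (x i (l * h) ω) ^ 2 ∂P =
        σ ^ 4 / (4 * a ^ 2) *
          (3 * q ^ (k + l) - q ^ k - 5 * q ^ l + 2 * q ^ (l - k) + 1) := by
    intro i k l hkl hl
    have hkh : (k : ℝ) * h ≤ (l : ℝ) * h := by
      have : (k : ℝ) ≤ l := Nat.cast_le.mpr hkl
      nlinarith
    rw [hm4 i (k * h) (l * h) (by positivity) hkh (hNh l hl.le)]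
    have e3 : Real.exp (-2 * a * ((k : ℝ) * h)) = (q ^ k)⁻¹ := by
      rw [show -2 * a * ((k : ℝ) * h) = -(2 * a * ((k : ℝ) * h)) by ring, Real.exp_neg,
        hexpk k]
    have e4 : Real.exp (-2 * a * ((l : ℝ) * h)) = (q ^ l)⁻¹ := by
      rw [show -2 * a * ((l : ℝ) * h) = -(2 * a * ((l : ℝ) * h)) by ring, Real.exp_neg,
        hexpk l]
    rw [hexpk k, hexpk l, e3, e4]
    have hql : q ^ (l - k) = q ^ l / q ^ k := by
      rw [eq_div_iff (by positivity), ← pow_add]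
      congr 1
      omega
    rw [hql]
    have h1 : q ^ k ≠ 0 := by positivity
    have h2 : q ^ l ≠ 0 := by positivity
    field_simp
    ring
  -- L² membership of squares and integrability of products
  have hx2 : ∀ (i : Fin M) (k : ℕ), k < N →
      MemLp (fun ω => (x i (k * h) ω) ^ 2) 2 P := by
    intro i k hk
    have h4 := hL4 i k hk
    have h24 : (1 : ENNReal) / 2 = 1 / 4 + 1 / 4 := by
      rw [ENNReal.div_add_div_same, show (4 : ENNReal) = 2 * 2 by norm_num,
        show (1 : ENNReal) + 1 = 1 * 2 by norm_num,
        ENNReal.mul_div_mul_right 1 2 (by norm_num) (by norm_num)]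
    haveI : ENNReal.HolderTriple 4 4 2 := ⟨by simpa [one_div] using h24.symm⟩
    have hsm := h4.smul (φ := x i (k * h)) (r := 2) h4
    have heq : (fun ω => (x i (k * h) ω) ^ 2) = (x i (k * h)) • (x i (k * h)) := by
      funext ω
      simp [pow_two]
    rw [heq]
    exact hsm
  have h12 : (1 : ENNReal) / 1 = 1 / 2 + 1 / 2 := by rw [ENNReal.add_halves, div_one]
  have hprodInt : ∀ (i j : Fin M) (k l : ℕ), k < N → l < N →
      Integrable (fun ω => (x i (k * h) ω) ^ 2 * (x j (l * h) ω) ^ 2) P := by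
    intro i j k l hk hl
    haveI : ENNReal.HolderTriple 2 2 1 := ⟨by simpa [one_div] using h12.symm⟩
    have hsm := (hx2 j l hl).smul (r := 1) (hx2 i k hk)
    rw [← memLp_one_iff_integrable]
    have heq : (fun ω => (x i (k * h) ω) ^ 2 * (x j (l * h) ω) ^ 2) =
        (fun ω => (x i (k * h) ω) ^ 2) • (fun ω => (x j (l * h) ω) ^ 2) := by
      funext ω
      simp [smul_eq_mul]
    rw [heq]
    exact hsm
  have hxInt : ∀ (i : Fin M) (k : ℕ), k < N →
      Integrable (fun ω => (x i (k * h) ω) ^ 2) P :=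
    fun i k hk => (hx2 i k hk).integrable (by norm_num)
  -- the per-trajectory return
  set Y : Fin M → Ω → ℝ := fun i ω => ∑ k ∈ Finset.range N, h * (x i (k * h) ω) ^ 2
    with hYdef
  have hYeq : ∀ i, Y i = fun ω => ∑ k ∈ Finset.range N, h * (x i (k * h) ω) ^ 2 :=
    fun i => rfl
  have hYInt : ∀ i, Integrable (Y i) P := by
    intro i
    rw [hYeq i]
    exact integrable_finset_sum _
      (fun k hk => (hxInt i k (Finset.mem_range.mp hk)).const_mul h)
  have hYprod : ∀ i j, (fun ω => Y i ω * Y j ω) =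
      fun ω => ∑ k ∈ Finset.range N, ∑ l ∈ Finset.range N,
        h ^ 2 * ((x i (k * h) ω) ^ 2 * (x j (l * h) ω) ^ 2) := by
    intro i j
    funext ω
    show (∑ k ∈ Finset.range N, h * (x i (k * h) ω) ^ 2) *
        (∑ l ∈ Finset.range N, h * (x j (l * h) ω) ^ 2) = _
    rw [Finset.sum_mul_sum]
    exact Finset.sum_congr rfl fun k _ => Finset.sum_congr rfl fun l _ => by ring
  have hYmulInt : ∀ i j, Integrable (fun ω => Y i ω * Y j ω) P := by
    intro i j
    rw [hYprod i j]
    refine integrable_finset_sum _ fun k hk => integrable_finset_sum _ fun l hl => ?_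
    exact (hprodInt i j k l (Finset.mem_range.mp hk) (Finset.mem_range.mp hl)).const_mul _
  -- value of the mean
  set S : ℝ := ∑ k ∈ Finset.range N, q ^ k with hSdef
  set μv : ℝ := h * (c * (S - (N : ℝ))) with hμvdef
  have hμ : ∀ i, ∫ ω, Y i ω ∂P = μv := by
    intro i
    rw [hYeq i]
    rw [integral_finset_sum _
      (fun k hk => (hxInt i k (Finset.mem_range.mp hk)).const_mul h)]
    rw [Finset.sum_congr rfl (fun k hk => by
      rw [MeasureTheory.integral_const_mul, hm2' i k (Finset.mem_range.mp hk)])]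
    rw [← Finset.mul_sum, ← Finset.mul_sum, Finset.sum_sub_distrib, Finset.sum_const,
      Finset.card_range, nsmul_eq_mul, mul_one]
  -- the symmetric fourth-moment value
  have hG : ∀ (i : Fin M) (k l : ℕ), k < N → l < N →
      ∫ ω, (x i (k * h) ω) ^ 2 * (x i (l * h) ω) ^ 2 ∂P =
        σ ^ 4 / (4 * a ^ 2) * (3 * q ^ (k + l) - q ^ (min k l) - 5 * q ^ (max k l)
          + 2 * q ^ (max k l - min k l) + 1) := by
    intro i k l hk hl
    rcases le_total k l with hkl | hkl
    · rw [hm4' i k l hkl hl, min_eq_left hkl, max_eq_right hkl]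
    · rw [show (∫ ω, (x i (k * h) ω) ^ 2 * (x i (l * h) ω) ^ 2 ∂P)
            = ∫ ω, (x i (l * h) ω) ^ 2 * (x i (k * h) ω) ^ 2 ∂P by
          congr 1; funext ω; ring,
        hm4' i l k hkl hk, min_eq_right hkl, max_eq_left hkl, Nat.add_comm l k]
  set G2 : ℝ := h ^ 2 * ∑ k ∈ Finset.range N, ∑ l ∈ Finset.range N,
      σ ^ 4 / (4 * a ^ 2) * (3 * q ^ (k + l) - q ^ (min k l) - 5 * q ^ (max k l)
        + 2 * q ^ (max k l - min k l) + 1) with hG2def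
  have hS2 : ∀ i, ∫ ω, Y i ω * Y i ω ∂P = G2 := by
    intro i
    rw [hYprod i i]
    rw [integral_finset_sum _ (fun k hk => integrable_finset_sum _ (fun l hl =>
      (hprodInt i i k l (Finset.mem_range.mp hk) (Finset.mem_range.mp hl)).const_mul _))]
    rw [Finset.sum_congr rfl (fun k hk => integral_finset_sum _ (fun l hl =>
      (hprodInt i i k l (Finset.mem_range.mp hk) (Finset.mem_range.mp hl)).const_mul _))]
    rw [Finset.sum_congr rfl (fun k hk => Finset.sum_congr rfl (fun l hl => by
      rw [MeasureTheory.integral_const_mul,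
        hG i k l (Finset.mem_range.mp hk) (Finset.mem_range.mp hl)]))]
    rw [hG2def, Finset.mul_sum]
    exact Finset.sum_congr rfl fun k _ => (Finset.mul_sum _ _ _).symm
  -- independence
  have hYindep : ∀ i j, i ≠ j →
      ∫ ω, Y i ω * Y j ω ∂P = (∫ ω, Y i ω ∂P) * ∫ ω, Y j ω ∂P := by
    intro i j hij
    have hvind := hindep.indepFun hij
    have hg : Measurable (fun v : Fin N → ℝ => ∑ k : Fin N, h * (v k) ^ 2) := by
      apply Finset.measurable_sum
      intro k _
      exact measurable_const.mul ((measurable_pi_apply k).pow_const 2)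
    have hcomp := hvind.comp hg hg
    have hYi : ∀ i' : Fin M, Y i' = (fun v : Fin N → ℝ => ∑ k : Fin N, h * (v k) ^ 2) ∘
        (fun ω => fun k : Fin N => x i' ((k : ℕ) * h) ω) := by
      intro i'
      funext ω
      show (∑ k ∈ Finset.range N, h * (x i' (k * h) ω) ^ 2) = _
      rw [← Fin.sum_univ_eq_sum_range (fun k : ℕ => h * (x i' (k * h) ω) ^ 2) N]
      rfl
    have h2 := hcomp.integral_fun_mul_eq_mul_integral
      (by rw [← hYi i]; exact (hYInt i).aestronglyMeasurable)
      (by rw [← hYi j]; exact (hYInt j).aestronglyMeasurable)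
    rw [hYi i, hYi j]
    exact h2
  -- sum over pairs
  have hpair : ∀ i : Fin M, ∑ j : Fin M, (∫ ω, Y i ω * Y j ω ∂P)
      = G2 + ((M : ℝ) - 1) * μv ^ 2 := by
    intro i
    rw [← Finset.add_sum_erase _ _ (Finset.mem_univ i)]
    congr 1
    · exact hS2 i
    · rw [Finset.sum_congr rfl (fun j hj => by
        rw [hYindep i j (Finset.ne_of_mem_erase hj).symm, hμ i, hμ j])]
      rw [Finset.sum_const, Finset.card_erase_of_mem (Finset.mem_univ i),
        Finset.card_univ, Fintype.card_fin, nsmul_eq_mul, Nat.cast_sub hM]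
      push_cast
      ring
  -- main expansion
  have key : ∫ ω, ((1 / (M : ℝ)) * ∑ i : Fin M, Y i ω - V) ^ 2 ∂P
      = (1 / (M : ℝ)) ^ 2 * ∑ i : Fin M, ∑ j : Fin M, (∫ ω, Y i ω * Y j ω ∂P)
        - 2 * V * (1 / (M : ℝ)) * ∑ i : Fin M, (∫ ω, Y i ω ∂P) + V ^ 2 := by
    have hint1 : Integrable
        (fun ω => (1 / (M : ℝ)) ^ 2 * ∑ i : Fin M, ∑ j : Fin M, Y i ω * Y j ω) P :=
      (integrable_finset_sum _
        (fun i _ => integrable_finset_sum _ (fun j _ => hYmulInt i j))).const_mul _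
    have hint2 : Integrable
        (fun ω => 2 * V * (1 / (M : ℝ)) * ∑ i : Fin M, Y i ω) P :=
      (integrable_finset_sum _ (fun i _ => hYInt i)).const_mul _
    have heq : (fun ω => ((1 / (M : ℝ)) * ∑ i : Fin M, Y i ω - V) ^ 2)
        = fun ω => ((1 / (M : ℝ)) ^ 2 * ∑ i : Fin M, ∑ j : Fin M, Y i ω * Y j ω
            - 2 * V * (1 / (M : ℝ)) * ∑ i : Fin M, Y i ω + V ^ 2) := by
      funext ω
      rw [show ((1 / (M : ℝ)) * ∑ i : Fin M, Y i ω - V) ^ 2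
          = (1 / (M : ℝ)) ^ 2 * ((∑ i : Fin M, Y i ω) * (∑ j : Fin M, Y j ω))
            - 2 * V * (1 / (M : ℝ)) * ∑ i : Fin M, Y i ω + V ^ 2 by ring]
      rw [Finset.sum_mul_sum]
    have hint3 : Integrable (fun ω =>
        (1 / (M : ℝ)) ^ 2 * ∑ i : Fin M, ∑ j : Fin M, Y i ω * Y j ω
          - 2 * V * (1 / (M : ℝ)) * ∑ i : Fin M, Y i ω) P := hint1.sub hint2
    rw [heq]
    rw [integral_add hint3 (integrable_const _)]
    rw [integral_sub hint1 hint2]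
    rw [MeasureTheory.integral_const_mul, MeasureTheory.integral_const_mul]
    rw [integral_finset_sum _
      (fun i _ => integrable_finset_sum _ (fun j _ => hYmulInt i j))]
    rw [integral_finset_sum _ (fun i _ => hYInt i)]
    rw [Finset.sum_congr rfl
      (fun i _ => integral_finset_sum _ (fun j _ => hYmulInt i j))]
    simp [measure_univ]
  -- rewrite the goal's integrand in terms of Y
  have hL : (fun ω => ((1 / (M : ℝ)) * ∑ i : Fin M,
        ∑ k ∈ Finset.range N, h * (x i (k * h) ω) ^ 2 - V) ^ 2)
      = (fun ω => ((1 / (M : ℝ)) * ∑ i : Fin M, Y i ω - V) ^ 2) := rfl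
  rw [hL, key]
  rw [Finset.sum_congr rfl (fun i _ => hpair i),
    Finset.sum_congr rfl (fun i _ => hμ i)]
  rw [Finset.sum_const, Finset.card_univ, Fintype.card_fin, nsmul_eq_mul,
    Finset.sum_const, Finset.card_univ, Fintype.card_fin, nsmul_eq_mul]
  -- algebraic endgame
  set D : ℝ := ∑ k ∈ Finset.range N, ∑ l ∈ Finset.range N,
      (q ^ (k + l) - 2 * q ^ (max k l) + q ^ (max k l - min k l)) with hDdef
  have hterm : ∀ k l : ℕ,
      σ ^ 4 / (4 * a ^ 2) * (3 * q ^ (k + l) - q ^ (min k l) - 5 * q ^ (max k l)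
          + 2 * q ^ (max k l - min k l) + 1)
        - c ^ 2 * ((q ^ k - 1) * (q ^ l - 1))
      = 2 * c ^ 2 * (q ^ (k + l) - 2 * q ^ (max k l) + q ^ (max k l - min k l)) := by
    intro k l
    have hc2 : c ^ 2 = σ ^ 4 / (4 * a ^ 2) := by
      rw [hcdef]
      field_simp
      ring
    rcases le_total k l with hkl | hkl
    · rw [min_eq_left hkl, max_eq_right hkl, hc2]
      ring
    · rw [min_eq_right hkl, max_eq_left hkl, hc2]
      ring
  have hSN : S - (N : ℝ) = ∑ k ∈ Finset.range N, (q ^ k - 1) := by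
    rw [hSdef, Finset.sum_sub_distrib, Finset.sum_const, Finset.card_range,
      nsmul_eq_mul, mul_one]
  have hG2val : G2 = μv ^ 2 + 2 * c ^ 2 * (h ^ 2 * D) := by
    have e1 : μv ^ 2 = h ^ 2 * ∑ k ∈ Finset.range N, ∑ l ∈ Finset.range N,
        c ^ 2 * ((q ^ k - 1) * (q ^ l - 1)) := by
      rw [hμvdef, show (h * (c * (S - (N : ℝ)))) ^ 2
          = h ^ 2 * ((c ^ 2) * ((S - (N : ℝ)) * (S - (N : ℝ)))) by ring, hSN,
        Finset.sum_mul_sum]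
      congr 1
      rw [Finset.mul_sum]
      exact Finset.sum_congr rfl fun k _ => (Finset.mul_sum _ _ _)
    have e2 : 2 * c ^ 2 * (h ^ 2 * D) = h ^ 2 * ∑ k ∈ Finset.range N,
        ∑ l ∈ Finset.range N, 2 * c ^ 2 *
          (q ^ (k + l) - 2 * q ^ (max k l) + q ^ (max k l - min k l)) := by
      rw [hDdef, show 2 * c ^ 2 * (h ^ 2 * (∑ k ∈ Finset.range N, ∑ l ∈ Finset.range N,
          (q ^ (k + l) - 2 * q ^ (max k l) + q ^ (max k l - min k l))))
        = h ^ 2 * (2 * c ^ 2 * ∑ k ∈ Finset.range N, ∑ l ∈ Finset.range N,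
          (q ^ (k + l) - 2 * q ^ (max k l) + q ^ (max k l - min k l))) by ring]
      congr 1
      rw [Finset.mul_sum]
      exact Finset.sum_congr rfl fun k _ => (Finset.mul_sum _ _ _)
    rw [e1, e2, hG2def, ← mul_add]
    congr 1
    rw [← Finset.sum_add_distrib]
    refine Finset.sum_congr rfl fun k _ => ?_
    rw [← Finset.sum_add_distrib]
    refine Finset.sum_congr rfl fun l _ => ?_
    linear_combination hterm k l
  have hSval : S = (q ^ N - 1) / (q - 1) := by
    rw [eq_div_iff hqne]
    exact aux_geom q N
  have hDval : D = ((q ^ N - 1) * (4 * q + q ^ N + 1)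
      - N * (q - 1) * (q + 4 * q ^ N + 1)) / (q - 1) ^ 2 := by
    rw [eq_div_iff (pow_ne_zero 2 hqne), mul_comm]
    exact aux_D q N
  rw [hG2val, hμvdef, hVdef, hcdef, hSval, hDval]
  field_simp
  ring
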